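/- Let m ≤ n be nonnegative integers. Let f : F_2^n × F_2^d → F_2^r be a strong lossless (m, ε)-condenser such that f(·, u) is F_2-linear for every seed u ∈ F_2^d, and let g : F_2^n × F_2^{d'} → F_2^k be a strong (n−m, ε')-extractor such that g(·, u) is F_2-linear and surjective for every seed u ∈ F_2^{d'}; for u ∈ F_2^{d'} let G_u denote the k×n matrix of g(·, u), so that g(x, u) = x·G_uᵀ. Then for every set S ⊆ [n] of size at most m: (1) for all but at most 5ε·2^d seeds u ∈ F_2^d, the linear code C_u := {x ∈ F_2^n : f(x, u) = 0} contains no nonzero codeword whose support lies inside S (so every codeword of C_u is uniquely determined by its coordinates outside S); and (2) for all but at most 5ε'·2^{d'} seeds u ∈ F_2^{d'}, the map sending x ∈ F_2^k to the restriction of x·G_u to the coordinates outside S is injective. -/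

import Mathlib

/-- Statistical distance between two distributions on a finite set. -/
noncomputable def statDist {Ω : Type*} [Fintype Ω] (p q : Ω → ℝ) : ℝ :=
  (∑ x, |p x - q x|) / 2

/-- `p` is a probability distribution on a finite set. -/
def IsDist {Ω : Type*} [Fintype Ω] (p : Ω → ℝ) : Prop :=
  (∀ x, 0 ≤ p x) ∧ (∑ x, p x) = 1

/-- `p` has min-entropy at least `b` (bits). -/
def minEntropyGe {Ω : Type*} [Fintype Ω] (p : Ω → ℝ) (b : ℝ) : Prop :=
  ∀ x, p x ≤ (2 : ℝ) ^ (-b)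

/-- The uniform distribution on a finite type. -/
noncomputable def unif (Ω : Type*) [Fintype Ω] : Ω → ℝ :=
  fun _ => (Fintype.card Ω : ℝ)⁻¹

/-- Joint distribution of `(Z, f(X, Z))` where `X ∼ p` and `Z` is uniform. -/
noncomputable def jointDist {A S B : Type*} [Fintype A] [Fintype S] [DecidableEq B]
    (p : A → ℝ) (f : A → S → B) : S × B → ℝ :=
  fun sb => (Fintype.card S : ℝ)⁻¹ * ∑ x, if f x sb.1 = sb.2 then p x else 0

/-- Strong `(k, ε)`-extractor. -/
def IsStrongExtractor {A S B : Type*} [Fintype A] [Fintype S] [Fintype B] [DecidableEq B]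
    (f : A → S → B) (k ε : ℝ) : Prop :=
  ∀ p : A → ℝ, IsDist p → minEntropyGe p k →
    statDist (jointDist p f) (unif (S × B)) ≤ ε

/-- Strong `k →_ε k'` condenser. -/
def IsStrongCondenser {A S B : Type*} [Fintype A] [Fintype S] [Fintype B] [DecidableEq B]
    (f : A → S → B) (k k' ε : ℝ) : Prop :=
  ∀ p : A → ℝ, IsDist p → minEntropyGe p k →
    ∃ q : S × B → ℝ, IsDist q ∧
      minEntropyGe q (Real.logb 2 (Fintype.card S) + k') ∧
      statDist (jointDist p f) q ≤ ε

open Finset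

lemma statDist_nonneg {Ω : Type*} [Fintype Ω] (p q : Ω → ℝ) : 0 ≤ statDist p q := by
  unfold statDist; positivity

lemma countLemma {Sd B : Type*} [Fintype Sd] [Fintype B]
    (j q : Sd × B → ℝ) (ε c : ℝ) (T : Finset Sd)
    (hsd : statDist j q ≤ ε)
    (hT : ∀ u ∈ T, c ≤ ∑ b, |j (u, b) - q (u, b)|) :
    (T.card : ℝ) * c ≤ 2 * ε := by
  have h1 : (T.card : ℝ) * c ≤ ∑ u ∈ T, ∑ b, |j (u, b) - q (u, b)| := by
    simpa [nsmul_eq_mul] using Finset.card_nsmul_le_sum T _ c hT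
  have h2 : ∑ u ∈ T, ∑ b, |j (u, b) - q (u, b)| ≤ ∑ u, ∑ b, |j (u, b) - q (u, b)| :=
    Finset.sum_le_sum_of_subset_of_nonneg (subset_univ T) (by intros; positivity)
  have h3 : ∑ u : Sd, ∑ b : B, |j (u, b) - q (u, b)| = 2 * statDist j q := by
    rw [statDist, show (∑ x : Sd × B, |j x - q x|) = ∑ u : Sd, ∑ b : B, |j (u, b) - q (u, b)|
      from Fintype.sum_prod_type _]; ring
  nlinarith [statDist_nonneg j q]

lemma isDist_unifOn {A : Type*} [Fintype A] [DecidableEq A] (V : Finset A) (hV : V.Nonempty) :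
    IsDist (fun x => if x ∈ V then ((V.card : ℝ))⁻¹ else 0) := by
  constructor
  · intro x; dsimp only; split <;> positivity
  · have h0 : (0:ℝ) < V.card := by exact_mod_cast hV.card_pos
    rw [Finset.sum_ite_mem, univ_inter, Finset.sum_const, nsmul_eq_mul]
    field_simp

lemma minEntropyGe_unifOn {A : Type*} [Fintype A] [DecidableEq A] (V : Finset A) (b : ℝ)
    (h : (2:ℝ) ^ b ≤ V.card) :
    minEntropyGe (fun x => if x ∈ V then ((V.card : ℝ))⁻¹ else 0) b := by
  intro x
  have h2 : (0:ℝ) < (2:ℝ) ^ b := Real.rpow_pos_of_pos (by norm_num) b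
  rw [Real.rpow_neg (by norm_num)]
  dsimp only; split
  · exact inv_anti₀ h2 h
  · positivity

lemma peru {A Sd B : Type*} [Fintype A] [DecidableEq A] [Fintype Sd] [Fintype B] [DecidableEq B]
    (f : A → Sd → B) (q : Sd × B → ℝ) (u : Sd)
    (V : Finset A) (hV : V.Nonempty)
    (D : Finset B) (hD : ∀ x ∈ V, f x u ∈ D)
    (cap : ℝ) (hq : ∀ b, q (u, b) ≤ cap) :
    (Fintype.card Sd : ℝ)⁻¹ - D.card * cap
      ≤ ∑ b, |jointDist (fun x => if x ∈ V then ((V.card : ℝ))⁻¹ else 0) f (u, b) - q (u, b)| := by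
  set p : A → ℝ := fun x => if x ∈ V then ((V.card : ℝ))⁻¹ else 0 with hp
  have hmass : ∑ b ∈ D, jointDist p f (u, b) = (Fintype.card Sd : ℝ)⁻¹ := by
    unfold jointDist
    rw [← Finset.mul_sum, Finset.sum_comm]
    have hinner : ∀ x : A, (∑ b ∈ D, if f x u = b then p x else 0) = p x := by
      intro x
      rw [Finset.sum_ite_eq D (f x u) (fun _ => p x)]
      by_cases hx : x ∈ V
      · rw [if_pos (hD x hx)]
      · simp [hp, hx]
    rw [Finset.sum_congr rfl (fun x _ => hinner x), (isDist_unifOn V hV).2, mul_one]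
  have hsub : ∑ b ∈ D, (jointDist p f (u, b) - q (u, b)) ≤ ∑ b, |jointDist p f (u, b) - q (u, b)| := by
    calc ∑ b ∈ D, (jointDist p f (u, b) - q (u, b))
        ≤ ∑ b ∈ D, |jointDist p f (u, b) - q (u, b)| :=
          Finset.sum_le_sum (fun b _ => le_abs_self _)
      _ ≤ ∑ b, |jointDist p f (u, b) - q (u, b)| :=
          Finset.sum_le_sum_of_subset_of_nonneg (subset_univ D) (by intros; positivity)
  have hqs : ∑ b ∈ D, q (u, b) ≤ D.card * cap := by
    simpa [nsmul_eq_mul] using Finset.sum_le_card_nsmul D (fun b => q (u, b)) cap (fun b _ => hq b)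
  rw [Finset.sum_sub_distrib, hmass] at hsub
  linarith

def coordSub {ι : Type*} [DecidableEq ι] (T : Finset ι) : Submodule (ZMod 2) (ι → ZMod 2) where
  carrier := {x | ∀ i ∉ T, x i = 0}
  add_mem' := fun ha hb i hi => by simp [ha i hi, hb i hi]
  zero_mem' := fun i _ => rfl
  smul_mem' := fun c a ha i hi => by simp [ha i hi]

lemma mem_coordSub {ι : Type*} [DecidableEq ι] (T : Finset ι) (x : ι → ZMod 2) :
    x ∈ coordSub T ↔ ∀ i ∉ T, x i = 0 := Iff.rfl

lemma card_coordSub {ι : Type*} [Fintype ι] [DecidableEq ι] (T : Finset ι) :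
    Nat.card (coordSub T) = 2 ^ T.card := by
  have e : coordSub T ≃ (T → ZMod 2) :=
    { toFun := fun x i => x.1 i
      invFun := fun y => ⟨fun i => if h : i ∈ T then y ⟨i, h⟩ else 0, fun i hi => dif_neg hi⟩
      left_inv := fun x => Subtype.ext (funext fun i => by
        by_cases h : i ∈ T
        · simp [h]
        · simp [h, (x.2 i h).symm])
      right_inv := fun y => funext fun i => by simp }
  rw [Nat.card_congr e, Nat.card_eq_fintype_card, Fintype.card_fun, ZMod.card, Fintype.card_coe]

lemma card_ker_mul_card_range {M N : Type*} [AddCommGroup M] [Module (ZMod 2) M]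
    [AddCommGroup N] [Module (ZMod 2) N] (φ : M →ₗ[ZMod 2] N) :
    Nat.card M = Nat.card (LinearMap.ker φ) * Nat.card (LinearMap.range φ) := by
  rw [Submodule.card_eq_card_quotient_mul_card (LinearMap.ker φ),
      Nat.card_congr (φ.quotKerEquivRange).toEquiv]

lemma card_fun2 (t : ℕ) : Fintype.card (Fin t → ZMod 2) = 2 ^ t := by
  rw [Fintype.card_fun, ZMod.card, Fintype.card_fin]

open Finset in
open Classical in
/-- Linear lossless condensers give parity-check matrices, and linear
extractors give generator matrices, of codes correcting erasure patterns of size `≤ m`. -/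
theorem stmt17 (n m dd dd' r k : ℕ) (hmn : m ≤ n)
    (f : (Fin n → ZMod 2) → (Fin dd → ZMod 2) → Fin r → ZMod 2)
    (ε : ℝ) (hf : IsStrongCondenser f (m : ℝ) (m : ℝ) ε)
    (hflin : ∀ u, IsLinearMap (ZMod 2) (fun x => f x u))
    (g : (Fin n → ZMod 2) → (Fin dd' → ZMod 2) → Fin k → ZMod 2)
    (ε' : ℝ) (hg : IsStrongExtractor g ((n : ℝ) - (m : ℝ)) ε')
    (hglin : ∀ u, IsLinearMap (ZMod 2) (fun x => g x u))
    (hgsurj : ∀ u, Function.Surjective (fun x => g x u))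
    (G : (Fin dd' → ZMod 2) → Matrix (Fin k) (Fin n) (ZMod 2))
    (hG : ∀ u x, g x u = Matrix.mulVec (G u) x) :
    ∀ S : Finset (Fin n), S.card ≤ m →
      (((Finset.univ.filter (fun u : Fin dd → ZMod 2 =>
          ¬ ∀ x : Fin n → ZMod 2, f x u = 0 → (∀ i ∉ S, x i = 0) → x = 0)).card : ℝ)
        ≤ 5 * ε * 2 ^ dd) ∧
      (((Finset.univ.filter (fun u : Fin dd' → ZMod 2 =>
          ¬ Function.Injective (fun (x : Fin k → ZMod 2) =>
            fun j : {j // j ∉ S} => Matrix.vecMul x (G u) j.1))).card : ℝ)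
        ≤ 5 * ε' * 2 ^ dd') := by
  intro S hS
  constructor
  · -- Part 1 : condenser
    have main1 : ∀ T : Finset (Fin dd → ZMod 2),
        (∀ u ∈ T, ¬ ∀ x : Fin n → ZMod 2, f x u = 0 → (∀ i ∉ S, x i = 0) → x = 0) →
        (T.card : ℝ) ≤ 5 * ε * 2 ^ dd := by
      intro T hT
      obtain ⟨S', hSS', hS'card⟩ := Finset.exists_superset_card_eq hS (by simpa using hmn)
      set W := coordSub S' with hWdef
      set V : Finset (Fin n → ZMod 2) := Finset.univ.filter (fun x => x ∈ W) with hVdef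
      have hVcard : V.card = 2 ^ m := by
        have h1 : Nat.card W = 2 ^ m := by rw [hWdef, card_coordSub, hS'card]
        rw [hVdef, ← Fintype.card_subtype, ← Nat.card_eq_fintype_card]
        exact h1
      have hVne : V.Nonempty := Finset.card_pos.mp (by rw [hVcard]; positivity)
      set p : (Fin n → ZMod 2) → ℝ := fun x => if x ∈ V then ((V.card : ℝ))⁻¹ else 0 with hpdef
      have hmin : minEntropyGe p (m : ℝ) := by
        apply minEntropyGe_unifOn
        rw [hVcard, Real.rpow_natCast]
        push_cast
        exact le_refl _
      obtain ⟨q, hqdist, hqmin, hqsd⟩ := hf p (isDist_unifOn V hVne) hmin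
      have hε : 0 ≤ ε := le_trans (statDist_nonneg _ _) hqsd
      have hqcap : ∀ b, q b ≤ ((2:ℝ) ^ (dd + m))⁻¹ := by
        intro b
        have h := hqmin b
        have e1 : Real.logb 2 (Fintype.card (Fin dd → ZMod 2)) = (dd : ℝ) := by
          rw [card_fun2]
          rw [show ((2 ^ dd : ℕ) : ℝ) = (2:ℝ) ^ (dd : ℝ) by
            rw [Real.rpow_natCast]; push_cast; ring]
          exact Real.logb_rpow (by norm_num) (by norm_num)
        rw [e1] at h
        calc q b ≤ (2:ℝ) ^ (-((dd:ℝ) + m)) := h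
          _ = ((2:ℝ) ^ (dd + m))⁻¹ := by
              rw [Real.rpow_neg (by norm_num)]
              rw [show ((dd:ℝ) + (m:ℝ)) = ((dd + m : ℕ) : ℝ) by push_cast; ring,
                Real.rpow_natCast]
      have key : ∀ u ∈ T, ((2:ℝ) * 2 ^ dd)⁻¹ ≤ ∑ b, |jointDist p f (u, b) - q (u, b)| := by
        intro u hu
        obtain ⟨x₀, hx₀f, hx₀supp, hx₀ne⟩ := by
          have h := hT u hu; push_neg at h; exact h
        set φ : W →ₗ[ZMod 2] (Fin r → ZMod 2) :=
          (IsLinearMap.mk' _ (hflin u)).comp W.subtype with hφdef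
        have hx₀W : x₀ ∈ W := fun i hi => hx₀supp i (fun hiS => hi (hSS' hiS))
        have hker : (⟨x₀, hx₀W⟩ : W) ∈ LinearMap.ker φ := by
          rw [LinearMap.mem_ker]
          show f x₀ u = 0
          exact hx₀f
        have hnontriv : Nontrivial (LinearMap.ker φ) := by
          refine ⟨⟨⟨x₀, hx₀W⟩, hker⟩, 0, ?_⟩
          intro hcontra
          apply hx₀ne
          have h := congrArg (fun z : LinearMap.ker φ => (z.1.1 : Fin n → ZMod 2)) hcontra
          simpa using h
        have h2le : 2 ≤ Nat.card (LinearMap.ker φ) := Finite.one_lt_card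
        have hWcard : Nat.card W = 2 ^ m := by rw [hWdef, card_coordSub, hS'card]
        have hrange : 2 * Nat.card (LinearMap.range φ) ≤ 2 ^ m := by
          have h := card_ker_mul_card_range φ
          rw [hWcard] at h
          calc 2 * Nat.card (LinearMap.range φ)
              ≤ Nat.card (LinearMap.ker φ) * Nat.card (LinearMap.range φ) :=
                Nat.mul_le_mul_right _ h2le
            _ = 2 ^ m := h.symm
        set D : Finset (Fin r → ZMod 2) := (LinearMap.range φ : Set (Fin r → ZMod 2)).toFinset
          with hDdef
        have hDcard : 2 * D.card ≤ 2 ^ m := by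
          rw [hDdef, ← Nat.card_eq_card_toFinset]
          exact hrange
        have hD : ∀ x ∈ V, f x u ∈ D := by
          intro x hx
          rw [hDdef, Set.mem_toFinset]
          exact ⟨⟨x, (Finset.mem_filter.mp hx).2⟩, rfl⟩
        have hmain := peru f q u V hVne D hD (((2:ℝ) ^ (dd + m))⁻¹) (fun b => hqcap (u, b))
        have hcardSd : ((Fintype.card (Fin dd → ZMod 2) : ℕ) : ℝ) = 2 ^ dd := by
          rw [card_fun2]; push_cast; ring
        rw [hcardSd] at hmain
        have hP : (0:ℝ) < 2 ^ dd := by positivity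
        have hQ : (0:ℝ) < 2 ^ m := by positivity
        have hDr : (D.card : ℝ) ≤ 2 ^ m / 2 := by
          have h2 : ((2 * D.card : ℕ) : ℝ) ≤ ((2 ^ m : ℕ) : ℝ) := Nat.cast_le.mpr hDcard
          push_cast at h2
          linarith
        have h1 : (D.card : ℝ) * ((2:ℝ) ^ (dd + m))⁻¹ ≤ ((2:ℝ) * 2 ^ dd)⁻¹ := by
          rw [pow_add]
          calc (D.card : ℝ) * ((2:ℝ) ^ dd * 2 ^ m)⁻¹
              ≤ (2 ^ m / 2) * ((2:ℝ) ^ dd * 2 ^ m)⁻¹ :=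
                mul_le_mul_of_nonneg_right hDr (by positivity)
            _ = ((2:ℝ) * 2 ^ dd)⁻¹ := by field_simp
        have h2 : ((2:ℝ) * 2 ^ dd)⁻¹ = ((2:ℝ) ^ dd)⁻¹ / 2 := by
          rw [mul_inv]; ring
        linarith
      have hcount := countLemma (jointDist p f) q ε (((2:ℝ) * 2 ^ dd)⁻¹) T hqsd key
      have hP : (0:ℝ) < 2 ^ dd := by positivity
      have hstep : (T.card : ℝ) / (2 * 2 ^ dd) ≤ 2 * ε := by rwa [div_eq_mul_inv]
      have hTle := (div_le_iff₀ (show (0:ℝ) < 2 * 2 ^ dd by positivity)).mp hstep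
      linarith [mul_nonneg hε hP.le]
    exact main1 _ (fun u hu => (Finset.mem_filter.mp hu).2)
  · -- Part 2 : extractor
    have main2 : ∀ T : Finset (Fin dd' → ZMod 2),
        (∀ u ∈ T, ¬ Function.Injective (fun (x : Fin k → ZMod 2) =>
            fun j : {j // j ∉ S} => Matrix.vecMul x (G u) j.1)) →
        (T.card : ℝ) ≤ 5 * ε' * 2 ^ dd' := by
      intro T hT
      set V : Finset (Fin n → ZMod 2) := Finset.univ.filter (fun x => x ∈ coordSub Sᶜ)
        with hVdef
      have hVcard : V.card = 2 ^ (n - S.card) := by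
        have h1 : Nat.card (coordSub Sᶜ) = 2 ^ (n - S.card) := by
          rw [card_coordSub, Finset.card_compl, Fintype.card_fin]
        rw [hVdef, ← Fintype.card_subtype, ← Nat.card_eq_fintype_card]
        exact h1
      have hVne : V.Nonempty := Finset.card_pos.mp (by rw [hVcard]; positivity)
      set p : (Fin n → ZMod 2) → ℝ := fun x => if x ∈ V then ((V.card : ℝ))⁻¹ else 0 with hpdef
      have hmin : minEntropyGe p ((n : ℝ) - (m : ℝ)) := by
        apply minEntropyGe_unifOn
        rw [hVcard]
        rw [show ((n:ℝ) - (m:ℝ)) = ((n - m : ℕ) : ℝ) by rw [Nat.cast_sub hmn],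
          Real.rpow_natCast]
        push_cast
        exact pow_le_pow_right₀ (by norm_num) (Nat.sub_le_sub_left hS n)
      have hsd := hg p (isDist_unifOn V hVne) hmin
      have hε' : 0 ≤ ε' := le_trans (statDist_nonneg _ _) hsd
      have hqcap : ∀ b, unif ((Fin dd' → ZMod 2) × (Fin k → ZMod 2)) b
          ≤ ((2:ℝ) ^ dd' * 2 ^ k)⁻¹ := by
        intro b
        unfold unif
        rw [Fintype.card_prod, card_fun2, card_fun2]
        push_cast
        exact le_refl _
      have key : ∀ u ∈ T, ((2:ℝ) * 2 ^ dd')⁻¹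
          ≤ ∑ b, |jointDist p g (u, b) - unif ((Fin dd' → ZMod 2) × (Fin k → ZMod 2)) (u, b)| := by
        intro u hu
        obtain ⟨a, b, hab, hne⟩ := Function.not_injective_iff.mp (hT u hu)
        set y : Fin k → ZMod 2 := a - b with hydef
        have hy : y ≠ 0 := sub_ne_zero.mpr hne
        have h0 : ∀ j ∉ S, Matrix.vecMul y (G u) j = 0 := by
          intro j hj
          have h := congrFun hab ⟨j, hj⟩
          simp only at h
          rw [hydef, Matrix.sub_vecMul]
          simp [h]
        have hψlin : IsLinearMap (ZMod 2) (fun v : Fin k → ZMod 2 => dotProduct y v) := by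
          constructor
          · intro v w; exact dotProduct_add y v w
          · intro c v
            simp [dotProduct, Finset.mul_sum, smul_eq_mul]
            ring_nf
            apply Finset.sum_congr rfl
            intro i _
            ring
        set ψ : (Fin k → ZMod 2) →ₗ[ZMod 2] ZMod 2 := IsLinearMap.mk' _ hψlin with hψdef
        have hsurj : Function.Surjective ψ := by
          intro c
          obtain ⟨i, hyi⟩ := Function.ne_iff.mp hy
          refine ⟨Pi.single i ((y i)⁻¹ * c), ?_⟩
          show dotProduct y (Pi.single i ((y i)⁻¹ * c)) = c
          rw [dotProduct_single, ← mul_assoc, mul_inv_cancel₀ hyi, one_mul]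
        have hrange_top : LinearMap.range ψ = ⊤ := LinearMap.range_eq_top.mpr hsurj
        have hkercard : 2 * Nat.card (LinearMap.ker ψ) = 2 ^ k := by
          have h := card_ker_mul_card_range ψ
          rw [hrange_top] at h
          have h2 : Nat.card (⊤ : Submodule (ZMod 2) (ZMod 2)) = 2 := by
            rw [Nat.card_congr Submodule.topEquiv.toEquiv, Nat.card_zmod]
          have h3 : Nat.card (Fin k → ZMod 2) = 2 ^ k := by
            rw [Nat.card_eq_fintype_card, card_fun2]
          rw [h2, h3] at h
          omega
        set D : Finset (Fin k → ZMod 2) := Finset.univ.filter (fun b => b ∈ LinearMap.ker ψ)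
          with hDdef
        have hDcard : 2 * D.card = 2 ^ k := by
          rw [hDdef, ← Fintype.card_subtype, ← Nat.card_eq_fintype_card]
          exact hkercard
        have hD : ∀ x ∈ V, g x u ∈ D := by
          intro x hx
          rw [hDdef, Finset.mem_filter]
          refine ⟨Finset.mem_univ _, ?_⟩
          rw [LinearMap.mem_ker]
          show dotProduct y (g x u) = 0
          rw [hG u x, Matrix.dotProduct_mulVec]
          apply Finset.sum_eq_zero
          intro j _
          by_cases hj : j ∈ S
          · have hxj : x j = 0 := (Finset.mem_filter.mp hx).2 j (by simp [hj])
            rw [hxj, mul_zero]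
          · rw [h0 j hj, zero_mul]
        have hmain := peru g (unif _) u V hVne D hD (((2:ℝ) ^ dd' * 2 ^ k)⁻¹)
          (fun b => hqcap (u, b))
        have hcardSd : ((Fintype.card (Fin dd' → ZMod 2) : ℕ) : ℝ) = 2 ^ dd' := by
          rw [card_fun2]; push_cast; ring
        rw [hcardSd] at hmain
        have hP : (0:ℝ) < 2 ^ dd' := by positivity
        have hQ : (0:ℝ) < 2 ^ k := by positivity
        have hDr : (D.card : ℝ) ≤ 2 ^ k / 2 := by
          have h2 : ((2 * D.card : ℕ) : ℝ) = ((2 ^ k : ℕ) : ℝ) := by rw [hDcard]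
          push_cast at h2
          linarith
        have h1 : (D.card : ℝ) * ((2:ℝ) ^ dd' * 2 ^ k)⁻¹ ≤ ((2:ℝ) * 2 ^ dd')⁻¹ := by
          calc (D.card : ℝ) * ((2:ℝ) ^ dd' * 2 ^ k)⁻¹
              ≤ (2 ^ k / 2) * ((2:ℝ) ^ dd' * 2 ^ k)⁻¹ :=
                mul_le_mul_of_nonneg_right hDr (by positivity)
            _ = ((2:ℝ) * 2 ^ dd')⁻¹ := by field_simp
        have h2 : ((2:ℝ) * 2 ^ dd')⁻¹ = ((2:ℝ) ^ dd')⁻¹ / 2 := by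
          rw [mul_inv]; ring
        linarith
      have hcount := countLemma (jointDist p g) (unif _) ε' (((2:ℝ) * 2 ^ dd')⁻¹) T hsd key
      have hP : (0:ℝ) < 2 ^ dd' := by positivity
      have hstep : (T.card : ℝ) / (2 * 2 ^ dd') ≤ 2 * ε' := by rwa [div_eq_mul_inv]
      have hTle := (div_le_iff₀ (show (0:ℝ) < 2 * 2 ^ dd' by positivity)).mp hstep
      linarith [mul_nonneg hε' hP.le]
    exact main2 _ (fun u hu => (Finset.mem_filter.mp hu).2)
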